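/- Let n ≥ 1 and let a, b, A, B ∈ Matrix (Fin n) (Fin n) ℂ and z, w ∈ ℂ. With the pairing ⟨a, M⟩ := Tr(aᴴ M), the series ∑_{k=0}^∞ (1/k!) · Tr(aᴴ (z·I + A)ᵏ) · conj(Tr(bᴴ (w·I + B)ᵏ)) converges absolutely and equals Tr( (aᴴ ⊗ b) · exp( (z·I + A) ⊗ (conj(w)·I + Bᴴ) ) ), where ⊗ denotes the Kronecker product of matrices, exp the matrix exponential, I the identity matrix, and ᴴ the conjugate transpose. -/

import Mathlib

open scoped ComplexConjugate Matrix Kronecker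

/-- For `n × n` complex matrices `a, b, A, B` and `z, w ∈ ℂ`, with pairing
`⟨a, M⟩ = Tr(aᴴ M)`, the extended Fock-space kernel
`∑ₖ (1/k!) Tr(aᴴ (zI + A)ᵏ) · conj(Tr(bᴴ (wI + B)ᵏ))` converges absolutely and equals
`Tr((aᴴ ⊗ b) · exp((zI + A) ⊗ (w̄I + Bᴴ)))`, where `⊗` is the Kronecker product and `exp`
the matrix exponential. -/
theorem fock_kernel_matrix_algebra
    {n : ℕ} (hn : 1 ≤ n) (a b A B : Matrix (Fin n) (Fin n) ℂ) (z w : ℂ) :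
    Summable (fun k : ℕ =>
      ‖((k.factorial : ℂ))⁻¹ *
          Matrix.trace (aᴴ * (z • (1 : Matrix (Fin n) (Fin n) ℂ) + A) ^ k) *
          conj (Matrix.trace (bᴴ * (w • (1 : Matrix (Fin n) (Fin n) ℂ) + B) ^ k))‖) ∧
    ∑' k : ℕ,
        ((k.factorial : ℂ))⁻¹ *
          Matrix.trace (aᴴ * (z • (1 : Matrix (Fin n) (Fin n) ℂ) + A) ^ k) *
          conj (Matrix.trace (bᴴ * (w • (1 : Matrix (Fin n) (Fin n) ℂ) + B) ^ k))
      = Matrix.trace ((aᴴ ⊗ₖ b) *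
          NormedSpace.exp
            ((z • (1 : Matrix (Fin n) (Fin n) ℂ) + A) ⊗ₖ
              (conj w • (1 : Matrix (Fin n) (Fin n) ℂ) + Bᴴ))) := by
  letI : NormedRing (Matrix (Fin n × Fin n) (Fin n × Fin n) ℂ) := Matrix.linftyOpNormedRing
  letI : NormedAlgebra ℂ (Matrix (Fin n × Fin n) (Fin n × Fin n) ℂ) :=
    Matrix.linftyOpNormedAlgebra
  letI : TopologicalSpace (Matrix (Fin n × Fin n) (Fin n × Fin n) ℂ) :=
    PseudoMetricSpace.toUniformSpace.toTopologicalSpace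
  set M := z • (1 : Matrix (Fin n) (Fin n) ℂ) + A with hM
  set N := w • (1 : Matrix (Fin n) (Fin n) ℂ) + B with hN
  have hC : Nᴴ = conj w • (1 : Matrix (Fin n) (Fin n) ℂ) + Bᴴ := by
    simp [hN, Matrix.conjTranspose_add, Matrix.conjTranspose_smul, Complex.star_def]
  set X := M ⊗ₖ Nᴴ with hX
  have hpow : ∀ k : ℕ, X ^ k = (M ^ k) ⊗ₖ (Nᴴ ^ k) := by
    intro k
    induction k with
    | zero => simp [Matrix.one_kronecker_one]
    | succ k ih => rw [pow_succ, pow_succ, pow_succ, ih, Matrix.mul_kronecker_mul]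
  -- the continuous linear functional `Y ↦ Tr((aᴴ ⊗ₖ b) * Y)`
  let f : Matrix (Fin n × Fin n) (Fin n × Fin n) ℂ →L[ℂ] ℂ :=
    LinearMap.toContinuousLinearMap
      ((Matrix.traceLinearMap (Fin n × Fin n) ℂ ℂ).comp (LinearMap.mulLeft ℂ (aᴴ ⊗ₖ b)))
  have hf : ∀ Y, f Y = Matrix.trace ((aᴴ ⊗ₖ b) * Y) := fun Y => rfl
  have hterm : ∀ k : ℕ,
      ((k.factorial : ℂ))⁻¹ * Matrix.trace (aᴴ * M ^ k) * conj (Matrix.trace (bᴴ * N ^ k))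
        = f (((k.factorial : ℂ))⁻¹ • X ^ k) := by
    intro k
    have h1 : conj (Matrix.trace (bᴴ * N ^ k)) = Matrix.trace (b * Nᴴ ^ k) := by
      calc conj (Matrix.trace (bᴴ * N ^ k)) = Matrix.trace ((bᴴ * N ^ k)ᴴ) := by
            rw [Matrix.trace_conjTranspose]; rfl
        _ = Matrix.trace ((N ^ k)ᴴ * b) := by
            rw [Matrix.conjTranspose_mul, Matrix.conjTranspose_conjTranspose]
        _ = Matrix.trace (b * Nᴴ ^ k) := by
            rw [Matrix.trace_mul_comm, Matrix.conjTranspose_pow]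
    rw [hf, h1, mul_assoc, ← Matrix.trace_kronecker, Matrix.mul_kronecker_mul, ← hpow,
      Matrix.mul_smul, Matrix.trace_smul, smul_eq_mul]
  have hsum2 : Summable (fun k : ℕ => ((k.factorial : ℂ))⁻¹ • X ^ k) :=
    NormedSpace.expSeries_summable' (𝕂 := ℂ) X
  constructor
  · refine Summable.of_nonneg_of_le (fun k => norm_nonneg _) (fun k => ?_)
      ((NormedSpace.norm_expSeries_summable' (𝕂 := ℂ) X).mul_left ‖f‖)
    rw [hterm k]
    exact f.le_opNorm _
  · have hexp : NormedSpace.exp X = ∑' k : ℕ, ((k.factorial : ℂ))⁻¹ • X ^ k := by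
      rw [NormedSpace.exp_eq_tsum (𝕂 := ℂ)]
    rw [← hC, ← hX]
    erw [hexp]
    rw [← hf, f.map_tsum hsum2]
    exact tsum_congr hterm
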